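/- Let f be a finite simple graph with k vertices and g a finite simple graph on vertex set [n] with n ≥ 1, and let w_g be the step graphon of g. Then ∫_{[0,1]^{V(f)}} ∏_{{u,v} ∈ E(f)} w_g(x_u, x_v) dx = hom(f, g)/n^k, i.e. ρ(f, w_g) = ρ(f, g). -/

import Mathlib

open MeasureTheory Filter Topology
open scoped Classical

namespace EpsCLT

/-- Two subsets of `Fin p` (typically blocks of a partition) *cross* if there exist
`i < k < j < l` with `i, j` in one of them and `k, l` in the other. -/
def Crosses {p : ℕ} (B₁ B₂ : Finset (Fin p)) : Prop :=
  ∃ i k j l : Fin p, i < k ∧ k < j ∧ j < l ∧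
    ((i ∈ B₁ ∧ j ∈ B₁ ∧ k ∈ B₂ ∧ l ∈ B₂) ∨ (i ∈ B₂ ∧ j ∈ B₂ ∧ k ∈ B₁ ∧ l ∈ B₁))

theorem Crosses.symm {p : ℕ} {B₁ B₂ : Finset (Fin p)} (h : Crosses B₁ B₂) : Crosses B₂ B₁ := by
  obtain ⟨i, k, j, l, h1, h2, h3, h4⟩ := h
  exact ⟨i, k, j, l, h1, h2, h3, h4.symm⟩

/-- `P` is a pair partition of `Fin p`: every block has two elements and every point lies in
exactly one block. -/
def IsPairPartition {p : ℕ} (P : Finset (Finset (Fin p))) : Prop :=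
  (∀ B ∈ P, B.card = 2) ∧ ∀ i : Fin p, ∃! B, B ∈ P ∧ i ∈ B

/-- `P` is a partition of `Fin p`: blocks are nonempty and every point lies in exactly one. -/
def IsPartition {p : ℕ} (P : Finset (Finset (Fin p))) : Prop :=
  (∀ B ∈ P, B.Nonempty) ∧ ∀ i : Fin p, ∃! B, B ∈ P ∧ i ∈ B

/-- A partition is noncrossing if no two (distinct) blocks cross. -/
def IsNoncrossing {p : ℕ} (P : Finset (Finset (Fin p))) : Prop :=
  ∀ B₁ ∈ P, ∀ B₂ ∈ P, B₁ ≠ B₂ → ¬ Crosses B₁ B₂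

/-- The intersection graph `f_π` of a partition: vertices are the blocks, with an edge between
two blocks iff they cross. -/
def interGraph {p : ℕ} (P : Finset (Finset (Fin p))) : SimpleGraph {B // B ∈ P} where
  Adj B₁ B₂ := B₁ ≠ B₂ ∧ Crosses B₁.1 B₂.1
  symm := ⟨fun _ _ h => ⟨Ne.symm h.1, h.2.symm⟩⟩
  loopless := ⟨fun _ h => h.1 rfl⟩

/-- Product over the edges of a graph (each edge counted once) of a symmetric function of the
endpoints.  The function is symmetrized, so for symmetric `F` each factor is `F u v`. -/
noncomputable def edgeProd {V : Type*} [Fintype V] (f : SimpleGraph V) (F : V → V → ℝ) : ℝ :=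
  ∏ e ∈ f.edgeFinset, Sym2.lift ⟨fun u v => (F u v + F v u) / 2, fun u v => by ring⟩ e

/-- Homomorphism density `ρ(f, w)` of a finite simple graph in a graphon `w`. -/
noncomputable def density {V : Type*} [Fintype V] (f : SimpleGraph V) (w : ℝ → ℝ → ℝ) : ℝ :=
  ∫ x in Set.univ.pi (fun _ : V => Set.Icc (0:ℝ) 1), edgeProd f (fun u v => w (x u) (x v))

/-- The step function of an `n × n` matrix: on the box `[(i-1)/n, i/n) × [(j-1)/n, j/n)`
(0-indexed: `[i/n, (i+1)/n) × [j/n, (j+1)/n)`) it takes the value `Q i j`. -/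
noncomputable def stepFn {n : ℕ} (Q : Fin n → Fin n → ℝ) (x y : ℝ) : ℝ :=
  if hx : (⌊x * n⌋).toNat < n ∧ (⌊y * n⌋).toNat < n ∧ 0 ≤ x ∧ 0 ≤ y then
    Q ⟨(⌊x * n⌋).toNat, hx.1⟩ ⟨(⌊y * n⌋).toNat, hx.2.1⟩
  else 0

/-- The step graphon `w_g` of a finite simple graph on `[n]`. -/
noncomputable def stepGraphon {n : ℕ} (g : SimpleGraph (Fin n)) : ℝ → ℝ → ℝ :=
  stepFn (fun i j => if g.Adj i j then 1 else 0)

/-- The finset of all pair partitions of `Fin p`. -/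
noncomputable def pairPartitions (p : ℕ) : Finset (Finset (Finset (Fin p))) :=
  Finset.univ.filter IsPairPartition

/-- `Σ_{π ∈ P₂(p)} ρ(f_π, w)`, the `p`-th moment of the limit law `μ_w`. -/
noncomputable def momentFormula (p : ℕ) (w : ℝ → ℝ → ℝ) : ℝ :=
  ∑ P ∈ pairPartitions p, density (interGraph P) w

/-- `g`-independence (ε-independence) of a family of unital subalgebras with respect to a state
`τ`, following Młotkowski and Speicher–Wysoczański. -/
def GIndep {A : Type*} [Ring A] [Algebra ℂ A] (τ : A →ₗ[ℂ] ℂ) {ι : Type*}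
    (g : SimpleGraph ι) (B : ι → Subalgebra ℂ A) : Prop :=
  (∀ i j : ι, g.Adj i j →
      ∀ a ∈ B i, ∀ b ∈ B j, a * b = b * a ∧ τ (a * b) = τ a * τ b) ∧
  (∀ (k : ℕ) (idx : Fin k → ι),
      (∀ j₁ j₂ : Fin k, j₁ < j₂ → idx j₁ = idx j₂ →
        ∃ j₃, j₁ < j₃ ∧ j₃ < j₂ ∧ ¬ g.Adj (idx j₁) (idx j₃)) →
      ∀ a : Fin k → A, (∀ j, a j ∈ B (idx j)) → (∀ j, τ (a j) = 0) →
        τ (List.ofFn a).prod = 0)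

/-- The finset of graph homomorphisms from `f` to `g`. -/
noncomputable def homFinset {V W : Type*} [Fintype V] [Fintype W] (f : SimpleGraph V)
    (g : SimpleGraph W) : Finset (V → W) :=
  Finset.univ.filter fun φ => ∀ u v, f.Adj u v → g.Adj (φ u) (φ v)

/-- The finset of injective graph homomorphisms from `f` to `g`. -/
noncomputable def injHomFinset {V W : Type*} [Fintype V] [Fintype W] (f : SimpleGraph V)
    (g : SimpleGraph W) : Finset (V → W) :=
  Finset.univ.filter fun φ => Function.Injective φ ∧ ∀ u v, f.Adj u v → g.Adj (φ u) (φ v)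

/-- The number of graph homomorphisms `hom(f, g)`. -/
noncomputable def homCount {V W : Type*} [Fintype V] [Fintype W] (f : SimpleGraph V)
    (g : SimpleGraph W) : ℕ := (homFinset f g).card

/-- Weighted homomorphism density `ρ(f, (g, α))` of `f` in a node-weighted graph `(g, α)`. -/
noncomputable def wHomDensity {V W : Type*} [Fintype V] [Fintype W] (f : SimpleGraph V)
    (g : SimpleGraph W) (α : W → ℝ) : ℝ :=
  (∑ φ ∈ homFinset f g, ∏ v : V, α (φ v)) / (∑ v : W, α v) ^ (Fintype.card V)

/-- Weighted injective homomorphism density `ρ_inj(f, (g, α))`. -/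
noncomputable def wInjHomDensity {V W : Type*} [Fintype V] [Fintype W] (f : SimpleGraph V)
    (g : SimpleGraph W) (α : W → ℝ) : ℝ :=
  (∑ φ ∈ injHomFinset f g, ∏ v : V, α (φ v)) / (∑ v : W, α v) ^ (Fintype.card V)

section StepAux

variable {n : ℕ}

/-- The box of the step function indexed by `φ`. -/
def stepBox {V : Type*} (n : ℕ) (φ : V → Fin n) : Set (V → ℝ) :=
  Set.univ.pi fun v => Set.Ico ((φ v : ℝ) / n) (((φ v : ℝ) + 1) / n)

lemma floor_mul_eq_of_mem (hn : 1 ≤ n) {i : Fin n} {x : ℝ}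
    (h1 : (i : ℝ) / n ≤ x) (h2 : x < ((i : ℝ) + 1) / n) :
    ⌊x * n⌋ = (i : ℕ) := by
  have hn0 : (0 : ℝ) < n := by exact_mod_cast hn
  rw [Int.floor_eq_iff]
  constructor
  · push_cast
    calc (i : ℝ) = ((i : ℝ) / n) * n := by field_simp
    _ ≤ x * n := by gcongr
  · push_cast
    calc x * n < (((i : ℝ) + 1) / n) * n := by gcongr
    _ = (i : ℝ) + 1 := by field_simp

lemma nonneg_of_mem (hn : 1 ≤ n) {i : Fin n} {x : ℝ} (h1 : (i : ℝ) / n ≤ x) : 0 ≤ x := by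
  have hn0 : (0 : ℝ) < n := by exact_mod_cast hn
  have : (0 : ℝ) ≤ (i : ℝ) / n := by positivity
  linarith

lemma stepFn_apply (hn : 1 ≤ n) (Q : Fin n → Fin n → ℝ) {x y : ℝ} {i j : Fin n}
    (hx1 : (i : ℝ) / n ≤ x) (hx2 : x < ((i : ℝ) + 1) / n)
    (hy1 : (j : ℝ) / n ≤ y) (hy2 : y < ((j : ℝ) + 1) / n) :
    stepFn Q x y = Q i j := by
  have hfx : ⌊x * n⌋ = (i : ℕ) := floor_mul_eq_of_mem hn hx1 hx2
  have hfy : ⌊y * n⌋ = (j : ℕ) := floor_mul_eq_of_mem hn hy1 hy2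
  have h1 : (⌊x * n⌋).toNat = (i : ℕ) := by rw [hfx]; exact Int.toNat_natCast _
  have h2 : (⌊y * n⌋).toNat = (j : ℕ) := by rw [hfy]; exact Int.toNat_natCast _
  have hcond : (⌊x * n⌋).toNat < n ∧ (⌊y * n⌋).toNat < n ∧ 0 ≤ x ∧ 0 ≤ y :=
    ⟨h1 ▸ i.isLt, h2 ▸ j.isLt, nonneg_of_mem hn hx1, nonneg_of_mem hn hy1⟩
  rw [stepFn, dif_pos hcond]
  congr 1 <;> exact Fin.ext (by simpa)

lemma edgeProd_ite {V : Type*} [Fintype V] (f : SimpleGraph V)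
    (g : SimpleGraph (Fin n)) (φ : V → Fin n) :
    edgeProd f (fun u v => if g.Adj (φ u) (φ v) then (1 : ℝ) else 0) =
      if (∀ u v, f.Adj u v → g.Adj (φ u) (φ v)) then 1 else 0 := by
  classical
  have hfac : ∀ e ∈ f.edgeFinset,
      Sym2.lift ⟨fun u v => ((if g.Adj (φ u) (φ v) then (1:ℝ) else 0)
        + (if g.Adj (φ v) (φ u) then (1:ℝ) else 0)) / 2, fun u v => by ring⟩ e
      = Sym2.lift ⟨fun u v => if g.Adj (φ u) (φ v) then (1:ℝ) else 0,
          fun u v => by simp [g.adj_comm]⟩ e := by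
    intro e _
    induction e using Sym2.inductionOn with
    | hf u v => simp [g.adj_comm (φ u) (φ v)]
  rw [edgeProd, Finset.prod_congr rfl hfac]
  by_cases h : ∀ u v, f.Adj u v → g.Adj (φ u) (φ v)
  · rw [if_pos h]
    apply Finset.prod_eq_one
    intro e he
    induction e using Sym2.inductionOn with
    | hf u v =>
      rw [SimpleGraph.mem_edgeFinset, SimpleGraph.mem_edgeSet] at he
      simp [h u v he]
  · rw [if_neg h]
    push_neg at h
    obtain ⟨u, v, huv, hng⟩ := h
    refine Finset.prod_eq_zero (i := s(u, v)) ?_ ?_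
    · rw [SimpleGraph.mem_edgeFinset, SimpleGraph.mem_edgeSet]; exact huv
    · simp [hng]

lemma edgeProd_stepGraphon_on_box {V : Type*} [Fintype V] (f : SimpleGraph V)
    (hn : 1 ≤ n) (g : SimpleGraph (Fin n)) (φ : V → Fin n) {x : V → ℝ}
    (hx : x ∈ stepBox n φ) :
    edgeProd f (fun u v => stepGraphon g (x u) (x v)) =
      if (∀ u v, f.Adj u v → g.Adj (φ u) (φ v)) then 1 else 0 := by
  have hF : (fun u v => stepGraphon g (x u) (x v)) =
      fun u v => if g.Adj (φ u) (φ v) then (1 : ℝ) else 0 := by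
    funext u v
    have hu := hx u (Set.mem_univ u)
    have hv := hx v (Set.mem_univ v)
    exact stepFn_apply hn _ hu.1 hu.2 hv.1 hv.2
  rw [hF, edgeProd_ite]

lemma mem_stepBox_iff (hn : 1 ≤ n) {V : Type*} (φ : V → Fin n) {x : V → ℝ}
    (hx : ∀ v, x v ∈ Set.Ico (0 : ℝ) 1) :
    x ∈ stepBox n φ ↔ ∀ v, ((φ v : ℕ) : ℤ) = ⌊x v * n⌋ := by
  have hn0 : (0 : ℝ) < n := by exact_mod_cast hn
  constructor
  · intro h v
    exact ((floor_mul_eq_of_mem hn (h v (Set.mem_univ v)).1 (h v (Set.mem_univ v)).2)).symm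
  · intro h v _
    have h1 : ((φ v : ℕ) : ℝ) ≤ x v * n := by
      have := Int.floor_le (x v * n)
      rw [← h v] at this; exact_mod_cast this
    have h2 : x v * n < ((φ v : ℕ) : ℝ) + 1 := by
      have := Int.lt_floor_add_one (x v * n)
      rw [← h v] at this; exact_mod_cast this
    constructor
    · rw [div_le_iff₀ hn0]; exact h1
    · rw [lt_div_iff₀ hn0]; exact h2

end StepAux

lemma toNat_floor_lt {n : ℕ} (hn : 1 ≤ n) {x : ℝ} (h0 : 0 ≤ x) (h1 : x < 1) :
    (⌊x * n⌋).toNat < n := by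
  have hn0 : (0 : ℝ) < n := by exact_mod_cast hn
  have h2 : x * n < n := by nlinarith
  have h3 : ⌊x * n⌋ < (n : ℤ) := Int.floor_lt.2 (by exact_mod_cast h2)
  omega

set_option maxHeartbeats 1000000 in
/-- The homomorphism density of `f` in the step graphon of `g` equals `hom(f,g)/n^k`, i.e.
`ρ(f, w_g) = ρ(f, g)`. -/
theorem density_stepGraphon_eq_homCount_div
    {V : Type*} [Fintype V] (f : SimpleGraph V)
    {n : ℕ} (hn : 1 ≤ n) (g : SimpleGraph (Fin n)) :
    density f (stepGraphon g) = (homCount f g : ℝ) / (n : ℝ) ^ (Fintype.card V) := by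
  classical
  have hn0 : (0 : ℝ) < n := by exact_mod_cast hn
  set k := Fintype.card V with hk
  set S : Set (V → ℝ) := Set.univ.pi fun _ : V => Set.Ico (0 : ℝ) 1 with hS
  have hSmeas : MeasurableSet S := MeasurableSet.univ_pi fun _ => measurableSet_Ico
  set c : (V → Fin n) → ℝ :=
    fun φ => if (∀ u v, f.Adj u v → g.Adj (φ u) (φ v)) then 1 else 0 with hc
  have h1 : density f (stepGraphon g)
      = ∫ x in S, edgeProd f (fun u v => stepGraphon g (x u) (x v)) := by
    rw [density]
    have hae : S =ᵐ[(volume : Measure (V → ℝ))]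
        (Set.univ.pi fun _ : V => Set.Icc (0 : ℝ) 1) := by
      rw [MeasureTheory.volume_pi]
      exact Measure.pi_Ico_ae_eq_pi_Icc (μ := fun _ : V => (volume : Measure ℝ))
    exact (setIntegral_congr_set hae).symm
  have hex : ∀ x ∈ S, ∃ φ₀ : V → Fin n, x ∈ stepBox n φ₀ ∧
      ∀ φ : V → Fin n, x ∈ stepBox n φ → φ = φ₀ := by
    intro x hxS
    have hxv : ∀ v, x v ∈ Set.Ico (0 : ℝ) 1 := fun v => hxS v (Set.mem_univ v)
    refine ⟨fun v => ⟨(⌊x v * n⌋).toNat, toNat_floor_lt hn (hxv v).1 (hxv v).2⟩, ?_, ?_⟩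
    · rw [mem_stepBox_iff hn _ hxv]
      intro v
      have h0 : (0 : ℤ) ≤ ⌊x v * n⌋ :=
        Int.floor_nonneg.2 (mul_nonneg (hxv v).1 (le_of_lt hn0))
      show (((⌊x v * n⌋).toNat : ℕ) : ℤ) = ⌊x v * n⌋
      omega
    · intro φ hφ
      rw [mem_stepBox_iff hn _ hxv] at hφ
      funext v
      have h0 : (0 : ℤ) ≤ ⌊x v * n⌋ :=
        Int.floor_nonneg.2 (mul_nonneg (hxv v).1 (le_of_lt hn0))
      have hv := hφ v
      exact Fin.ext (show ((φ v : ℕ)) = (⌊x v * n⌋).toNat by omega)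
  have hEq : Set.EqOn (fun x => edgeProd f (fun u v => stepGraphon g (x u) (x v)))
      (fun x => ∑ φ : V → Fin n, (stepBox n φ).indicator (fun _ => c φ) x) S := by
    intro x hxS
    obtain ⟨φ₀, hφ₀, huniq⟩ := hex x hxS
    simp only []
    rw [Finset.sum_eq_single φ₀ (fun φ _ hne => by
        rw [Set.indicator_of_notMem]
        intro hmem; exact hne (huniq φ hmem)) (by simp),
      Set.indicator_of_mem hφ₀]
    exact edgeProd_stepGraphon_on_box f hn g φ₀ hφ₀
  have hbox_meas : ∀ φ : V → Fin n, MeasurableSet (stepBox n φ) :=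
    fun φ => MeasurableSet.univ_pi fun v => measurableSet_Ico
  have hbox_sub : ∀ φ : V → Fin n, stepBox n φ ⊆ S := by
    intro φ x hx v _
    have h := hx v (Set.mem_univ v)
    have h1 : (0 : ℝ) ≤ (φ v : ℝ) / n := by positivity
    have h2 : ((φ v : ℝ) + 1) / n ≤ 1 := by
      rw [div_le_one hn0]
      have : (φ v : ℕ) + 1 ≤ n := (φ v).isLt
      exact_mod_cast this
    exact ⟨le_trans h1 h.1, lt_of_lt_of_le h.2 h2⟩
  have hvol : ∀ φ : V → Fin n, volume (stepBox n φ) = ENNReal.ofReal ((1 : ℝ) / n) ^ k := by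
    intro φ
    rw [stepBox, volume_pi_pi]
    have hv : ∀ v : V, volume (Set.Ico ((φ v : ℝ) / n) (((φ v : ℝ) + 1) / n))
        = ENNReal.ofReal ((1 : ℝ) / n) := by
      intro v; rw [Real.volume_Ico]; congr 1; field_simp; ring
    simp [hv, Finset.prod_const, hk]
  have hint : ∀ φ : V → Fin n,
      Integrable ((stepBox n φ).indicator (fun _ => c φ)) (volume.restrict S) := by
    intro φ
    refine IntegrableOn.integrable_indicator ?_ (hbox_meas φ)
    refine integrableOn_const (ne_of_lt ?_)
    refine lt_of_le_of_lt (Measure.restrict_apply_le _ _) ?_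
    rw [hvol φ]
    exact ENNReal.pow_lt_top ENNReal.ofReal_lt_top
  have h2 : density f (stepGraphon g) = ∑ φ : V → Fin n, c φ * ((1 : ℝ) / n) ^ k := by
    rw [h1, setIntegral_congr_fun hSmeas hEq, integral_finset_sum _ (fun φ _ => hint φ)]
    refine Finset.sum_congr rfl fun φ _ => ?_
    rw [setIntegral_indicator (hbox_meas φ),
      Set.inter_eq_self_of_subset_right (hbox_sub φ), setIntegral_const, measureReal_def, hvol φ]
    rw [smul_eq_mul, ENNReal.toReal_pow, ENNReal.toReal_ofReal (by positivity)]
    ring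
  rw [h2, ← Finset.sum_mul]
  have hsum : ∑ φ : V → Fin n, c φ = (homCount f g : ℝ) := by
    rw [hc, homCount, homFinset, Finset.sum_boole]
  rw [hsum, div_pow, one_pow]
  ring


end EpsCLT
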